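/- If f : [-1,1]² → ℝ is continuous, of bounded variation in the sense of Vitali, has one bounded partial derivative, and its Chebyshev coefficient array satisfies ∑_{i,j} |c_{i,j}| < ∞, then the bivariate Chebyshev series ∑'_i ∑'_j c_{i,j} T_i(x) T_j(y) converges uniformly to f on [-1,1]². -/

import Mathlib

open MeasureTheory Real Finset

/-- Bivariate Chebyshev coefficient `c_{i,j}` of `f`. -/
noncomputable def cheb (f : ℝ → ℝ → ℝ) (i j : ℕ) : ℝ :=
  (4 / π ^ 2) * ∫ θx in (0:ℝ)..π, ∫ θy in (0:ℝ)..π,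
    f (Real.cos θx) (Real.cos θy) * Real.cos (i * θx) * Real.cos (j * θy)

/-- Chebyshev polynomial `T_n` on `[-1,1]`. -/
noncomputable def T (n : ℕ) (x : ℝ) : ℝ := Real.cos (n * Real.arccos x)

/-- Halving weight for the primed sums. -/
noncomputable def w (n : ℕ) : ℝ := if n = 0 then 1 / 2 else 1

/-- `f` is of bounded variation in the sense of Vitali on `[-1,1]²`: the sums of absolute
second-order mixed differences over all grid partitions of the square are uniformly bounded. -/
def BoundedVitaliVariation (f : ℝ → ℝ → ℝ) : Prop :=
  ∃ M : ℝ, ∀ (n m : ℕ) (x y : ℕ → ℝ), Monotone x → Monotone y →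
    (∀ i, x i ∈ Set.Icc (-1:ℝ) 1) → (∀ j, y j ∈ Set.Icc (-1:ℝ) 1) →
    (∑ i ∈ Finset.range n, ∑ j ∈ Finset.range m,
      |f (x (i+1)) (y (j+1)) - f (x (i+1)) (y j) - f (x i) (y (j+1)) + f (x i) (y j)|) ≤ M

/-! ### Elementary cosine integrals -/

lemma myCosMulCos (x y : ℝ) : Real.cos x * Real.cos y = (Real.cos (x+y) + Real.cos (x-y))/2 := by
  rw [Real.cos_add, Real.cos_sub]; ring

lemma integral_cos_real (c : ℝ) (hc : c ≠ 0) :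
    ∫ θ in (0:ℝ)..π, Real.cos (c*θ) = Real.sin (c*π)/c := by
  have h := intervalIntegral.integral_comp_mul_left (a := 0) (b := π) Real.cos hc
  rw [h]
  simp [integral_cos]
  ring

lemma integral_cos_int (k : ℤ) (hk : k ≠ 0) : ∫ θ in (0:ℝ)..π, Real.cos (k*θ) = 0 := by
  rw [integral_cos_real _ (by exact_mod_cast hk)]
  simp [Real.sin_int_mul_pi]

lemma ii_cos (c : ℝ) : IntervalIntegrable (fun θ => Real.cos (c*θ)) volume 0 π :=
  (Real.continuous_cos.comp (continuous_const.mul continuous_id)).intervalIntegrable _ _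

lemma int_cos_cos_aux (c1 c2 : ℝ) : (∫ θ in (0:ℝ)..π, (Real.cos (c1*θ) + Real.cos (c2*θ))/2)
    = ((∫ θ in (0:ℝ)..π, Real.cos (c1*θ)) + (∫ θ in (0:ℝ)..π, Real.cos (c2*θ)))/2 := by
  rw [intervalIntegral.integral_div, intervalIntegral.integral_add (ii_cos c1) (ii_cos c2)]

lemma orth (a i : ℕ) : (∫ θ in (0:ℝ)..π, Real.cos (a*θ) * Real.cos (i*θ))
    = if a = i then (if i = 0 then π else π/2) else 0 := by
  have key : ∀ θ:ℝ, Real.cos (a*θ) * Real.cos (i*θ)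
      = (Real.cos (((a+i:ℤ):ℝ)*θ) + Real.cos (((a-i:ℤ):ℝ)*θ))/2 := by
    intro θ
    rw [myCosMulCos]
    push_cast
    ring_nf
  rw [intervalIntegral.integral_congr (fun θ _ => key θ)]
  rw [int_cos_cos_aux]
  by_cases h : a = i
  · subst h
    rw [if_pos rfl]
    have h2 : ((a:ℤ) - a) = 0 := by ring
    rw [h2]
    by_cases h0 : a = 0
    · subst h0; simp
    · rw [if_neg h0]
      rw [integral_cos_int ((a:ℤ)+a) (by omega)]
      simp
  · rw [if_neg h]
    rw [integral_cos_int ((a:ℤ)+i) (by omega), integral_cos_int ((a:ℤ)-i) (by omega)]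
    norm_num

/-! ### The domain -/

noncomputable def Qset : Set (ℝ × ℝ) := Set.Ioc 0 π ×ˢ Set.Ioc 0 π
noncomputable def Kset : Set (ℝ × ℝ) := Set.Icc 0 π ×ˢ Set.Icc 0 π

lemma Qsub : Qset ⊆ Kset :=
  Set.prod_mono Set.Ioc_subset_Icc_self Set.Ioc_subset_Icc_self

lemma Kcompact : IsCompact Kset := isCompact_Icc.prod isCompact_Icc

lemma integrableQ {u : ℝ × ℝ → ℝ} (hu : Continuous u) : IntegrableOn u Qset volume :=
  ((hu.continuousOn).integrableOn_compact Kcompact).mono_set Qsub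

lemma iter_eq_setIntegral {u : ℝ × ℝ → ℝ} (hu : Continuous u) :
    (∫ θx in (0:ℝ)..π, ∫ θy in (0:ℝ)..π, u (θx, θy)) = ∫ p in Qset, u p := by
  have h0 : (0:ℝ) ≤ π := Real.pi_pos.le
  rw [intervalIntegral.integral_of_le h0]
  simp_rw [intervalIntegral.integral_of_le h0]
  rw [Qset, MeasureTheory.Measure.volume_eq_prod, MeasureTheory.setIntegral_prod]
  rw [← MeasureTheory.Measure.volume_eq_prod]
  exact integrableQ hu

lemma volQ : (volume Qset).toReal = π^2 := by
  rw [Qset, MeasureTheory.Measure.volume_eq_prod, MeasureTheory.Measure.prod_prod]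
  rw [Real.volume_Ioc]
  rw [← ENNReal.ofReal_mul (by simp [Real.pi_pos.le])]
  rw [ENNReal.toReal_ofReal (by nlinarith [Real.pi_pos])]
  ring

lemma setIntegral_Ioc_eq_interval {u : ℝ → ℝ} :
    (∫ θ in Set.Ioc (0:ℝ) π, u θ) = ∫ θ in (0:ℝ)..π, u θ := by
  rw [intervalIntegral.integral_of_le Real.pi_pos.le]

lemma prod_orth (a b i j : ℕ) :
    (∫ p in Qset, Real.cos (a*p.1) * Real.cos (i*p.1) * (Real.cos (b*p.2) * Real.cos (j*p.2)))
    = (if a = i then (if i = 0 then π else π/2) else 0) *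
      (if b = j then (if j = 0 then π else π/2) else 0) := by
  rw [Qset, MeasureTheory.Measure.volume_eq_prod]
  rw [MeasureTheory.setIntegral_prod_mul (fun x => Real.cos (a*x) * Real.cos (i*x))
    (fun y => Real.cos (b*y) * Real.cos (j*y))]
  rw [setIntegral_Ioc_eq_interval, setIntegral_Ioc_eq_interval]
  rw [orth, orth]

set_option maxHeartbeats 1000000 in
theorem cheb_series_uniform_convergence
    (f : ℝ → ℝ → ℝ)
    (hcont : ContinuousOn (fun p : ℝ × ℝ => f p.1 p.2)
      (Set.Icc (-1:ℝ) 1 ×ˢ Set.Icc (-1:ℝ) 1))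
    (hBV : BoundedVitaliVariation f)
    (hderiv : (∃ M : ℝ, ∀ x ∈ Set.Icc (-1:ℝ) 1, ∀ y ∈ Set.Icc (-1:ℝ) 1,
        |deriv (fun t => f t y) x| ≤ M) ∨
      (∃ M : ℝ, ∀ x ∈ Set.Icc (-1:ℝ) 1, ∀ y ∈ Set.Icc (-1:ℝ) 1,
        |deriv (fun t => f x t) y| ≤ M))
    (hsum : Summable fun p : ℕ × ℕ => |cheb f p.1 p.2|) :
    TendstoUniformlyOn
      (fun N (p : ℝ × ℝ) => ∑ i ∈ Finset.range (N + 1), ∑ j ∈ Finset.range (N + 1),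
        w i * w j * cheb f i j * T i p.1 * T j p.2)
      (fun p : ℝ × ℝ => f p.1 p.2) Filter.atTop
      (Set.Icc (-1:ℝ) 1 ×ˢ Set.Icc (-1:ℝ) 1) := by
  classical
  set c : ℕ → ℕ → ℝ := fun i j => cheb f i j with hc
  -- `F` is `f` read in the angular variables
  set F : ℝ × ℝ → ℝ := fun θ => f (Real.cos θ.1) (Real.cos θ.2) with hFdef
  have hF : Continuous F := by
    rw [← continuousOn_univ]
    have hmap : Continuous (fun θ : ℝ × ℝ => (Real.cos θ.1, Real.cos θ.2)) := by fun_prop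
    exact ContinuousOn.comp hcont hmap.continuousOn
      (fun θ _ => ⟨⟨Real.neg_one_le_cos _, Real.cos_le_one _⟩,
        ⟨Real.neg_one_le_cos _, Real.cos_le_one _⟩⟩)
  -- the series terms
  set term : ℕ × ℕ → (ℝ × ℝ) → ℝ := fun q θ =>
    w q.1 * w q.2 * c q.1 q.2 * Real.cos (q.1 * θ.1) * Real.cos (q.2 * θ.2) with hterm
  have hterm_cont : ∀ q, Continuous (term q) := by
    intro q; fun_prop
  have hterm_bound : ∀ q θ, ‖term q θ‖ ≤ |c q.1 q.2| := by
    intro q θ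
    have hw : ∀ n, |w n| ≤ 1 := by
      intro n
      have : w n = 1/2 ∨ w n = 1 := by
        unfold w; split; exacts [Or.inl rfl, Or.inr rfl]
      rcases this with h | h <;> rw [h, abs_of_nonneg (by norm_num)] <;> norm_num
    calc ‖term q θ‖ = |c q.1 q.2| * (|w q.1| * |w q.2| * |Real.cos (q.1 * θ.1)| *
          |Real.cos (q.2 * θ.2)|) := by
          simp only [hterm, Real.norm_eq_abs, abs_mul]; ring
      _ ≤ |c q.1 q.2| * 1 := by
          refine mul_le_mul_of_nonneg_left ?_ (abs_nonneg _)
          exact mul_le_one₀ (mul_le_one₀ (mul_le_one₀ (hw _) (abs_nonneg _) (hw _))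
            (abs_nonneg _) (Real.abs_cos_le_one _)) (abs_nonneg _) (Real.abs_cos_le_one _)
      _ = |c q.1 q.2| := mul_one _
  have hsum' : Summable fun q : ℕ × ℕ => |c q.1 q.2| := hsum
  set G : ℝ × ℝ → ℝ := fun θ => ∑' q : ℕ × ℕ, term q θ with hGdef
  have hGunif : TendstoUniformly (fun (s : Finset (ℕ × ℕ)) θ => ∑ q ∈ s, term q θ) G
      Filter.atTop := tendstoUniformly_tsum hsum' hterm_bound
  have hG : Continuous G :=
    hGunif.continuous (Filter.Eventually.of_forall fun s =>
      continuous_finset_sum s fun q _ => hterm_cont q).frequently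
  -- coefficients of F
  have hFc : ∀ i j : ℕ, (∫ p in Qset, F p * Real.cos (i*p.1) * Real.cos (j*p.2))
      = π^2/4 * c i j := by
    intro i j
    have h1 : c i j = (4/π^2) * ∫ p in Qset, F p * Real.cos (i*p.1) * Real.cos (j*p.2) := by
      rw [hc]
      show cheb f i j = _
      rw [cheb]
      congr 1
      exact iter_eq_setIntegral (u := fun p => F p * Real.cos (i*p.1) * Real.cos (j*p.2))
        (by fun_prop)
    have hπ : (π:ℝ) ≠ 0 := Real.pi_ne_zero
    rw [h1]; field_simp
  -- the coefficients of `G` agree with those of `F`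
  have hQmeas : MeasurableSet Qset := measurableSet_Ioc.prod measurableSet_Ioc
  have hQfin : volume Qset < ⊤ := lt_of_le_of_lt (measure_mono Qsub) Kcompact.measure_lt_top
  have hGc : ∀ i j : ℕ, (∫ p in Qset, G p * Real.cos (i*p.1) * Real.cos (j*p.2))
      = π^2/4 * c i j := by
    intro i j
    set v : ℕ × ℕ → (ℝ × ℝ) → ℝ := fun q p =>
      term q p * Real.cos (i*p.1) * Real.cos (j*p.2) with hv
    have hv_cont : ∀ q, Continuous (v q) := by
      intro q
      exact ((hterm_cont q).mul (by fun_prop)).mul (by fun_prop)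
    have hv_int : ∀ q, Integrable (v q) (volume.restrict Qset) := fun q =>
      integrableQ (hv_cont q)
    have hv_bound : ∀ q p, ‖v q p‖ ≤ |c q.1 q.2| := by
      intro q p
      calc ‖v q p‖ = ‖term q p‖ * |Real.cos (i*p.1)| * |Real.cos (j*p.2)| := by
            simp [hv, Real.norm_eq_abs, abs_mul]
        _ ≤ |c q.1 q.2| * 1 * 1 := by
            gcongr
            · exact hterm_bound q p
            · exact Real.abs_cos_le_one _
            · exact Real.abs_cos_le_one _
        _ = |c q.1 q.2| := by ring
    have hv_norm : ∀ q, (∫ p in Qset, ‖v q p‖) ≤ |c q.1 q.2| * π^2 := by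
      intro q
      calc (∫ p in Qset, ‖v q p‖) ≤ ∫ _p in Qset, |c q.1 q.2| := by
            refine setIntegral_mono_on (hv_int q).norm ?_ hQmeas (fun p _ => hv_bound q p)
            exact integrableOn_const hQfin.ne
        _ = |c q.1 q.2| * π^2 := by
            rw [setIntegral_const, smul_eq_mul, measureReal_def, volQ, mul_comm]
    have hv_summable : Summable fun q : ℕ × ℕ => ∫ p in Qset, ‖v q p‖ := by
      refine Summable.of_nonneg_of_le (fun q => ?_) hv_norm (hsum'.mul_right (π^2))
      exact integral_nonneg (fun p => norm_nonneg _)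
    have hswap := MeasureTheory.integral_tsum_of_summable_integral_norm hv_int hv_summable
    have hpt : ∀ p : ℝ × ℝ, G p * Real.cos (i*p.1) * Real.cos (j*p.2) = ∑' q : ℕ × ℕ, v q p := by
      intro p
      rw [hGdef]
      rw [← tsum_mul_right, ← tsum_mul_right]
    have hint : ∀ q : ℕ × ℕ, (∫ p in Qset, v q p) = w q.1 * w q.2 * c q.1 q.2 *
        ((if q.1 = i then (if i = 0 then π else π/2) else 0) *
         (if q.2 = j then (if j = 0 then π else π/2) else 0)) := by
      intro q
      have hre : ∀ p : ℝ × ℝ, v q p = (w q.1 * w q.2 * c q.1 q.2) *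
          (Real.cos (q.1*p.1) * Real.cos (i*p.1) * (Real.cos (q.2*p.2) * Real.cos (j*p.2))) := by
        intro p; rw [hv, hterm]; ring
      simp_rw [hre]
      rw [MeasureTheory.integral_const_mul, prod_orth]
    calc (∫ p in Qset, G p * Real.cos (i*p.1) * Real.cos (j*p.2))
        = ∫ p in Qset, ∑' q : ℕ × ℕ, v q p := by simp_rw [hpt]
      _ = ∑' q : ℕ × ℕ, ∫ p in Qset, v q p := hswap.symm
      _ = π^2/4 * c i j := by
          rw [tsum_eq_single (i, j) ?_]
          · rw [hint]
            simp only [if_pos rfl]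
            unfold w
            by_cases hi : i = 0 <;> by_cases hj : j = 0 <;>
              simp [hi, hj] <;> ring
          · intro q hq
            rw [hint]
            by_cases h1 : q.1 = i
            · by_cases h2 : q.2 = j
              · exact absurd (Prod.ext h1 h2) hq
              · simp [h2]
            · simp [h1]
  -- `H` is the difference; it has vanishing cosine coefficients
  set H : ℝ × ℝ → ℝ := fun p => F p - G p with hH
  have hHcont : Continuous H := hF.sub hG
  have hHorth : ∀ i j : ℕ, (∫ p in Qset, H p * Real.cos (i*p.1) * Real.cos (j*p.2)) = 0 := by
    intro i j
    have hsub : ∀ p : ℝ × ℝ, H p * Real.cos (i*p.1) * Real.cos (j*p.2)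
        = F p * Real.cos (i*p.1) * Real.cos (j*p.2)
          - G p * Real.cos (i*p.1) * Real.cos (j*p.2) := by
      intro p; rw [hH]; ring
    simp_rw [hsub]
    rw [MeasureTheory.integral_sub (integrableQ (u := fun p => F p * Real.cos (i*p.1) * Real.cos (j*p.2)) (by fun_prop)) (integrableQ (u := fun p => G p * Real.cos (i*p.1) * Real.cos (j*p.2)) ((hG.mul (by fun_prop)).mul (by fun_prop)))]
    rw [hFc, hGc, sub_self]
  -- Stone–Weierstrass on `Kset`
  haveI : CompactSpace Kset := isCompact_iff_compactSpace.mp Kcompact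
  have cos_prod : ∀ (a b : ℕ) (t : ℝ), Real.cos (a*t) * Real.cos (b*t)
      = (Real.cos (((a+b:ℕ):ℝ)*t) + Real.cos (((max a b - min a b : ℕ):ℝ)*t))/2 := by
    intro a b t
    rcases le_total a b with hab | hab
    · rw [max_eq_right hab, min_eq_left hab, myCosMulCos,
        ← Real.cos_neg ((a:ℝ)*t - (b:ℝ)*t)]
      push_cast [Nat.cast_sub hab]
      ring_nf
    · rw [max_eq_left hab, min_eq_right hab, myCosMulCos]
      push_cast [Nat.cast_sub hab]
      ring_nf
  set bmap : ℕ × ℕ → C(Kset, ℝ) := fun q =>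
    ⟨fun x => Real.cos (q.1 * (x:ℝ×ℝ).1) * Real.cos (q.2 * (x:ℝ×ℝ).2),
      ((Real.continuous_cos.comp (continuous_const.mul
        (continuous_fst.comp continuous_subtype_val))).mul
       (Real.continuous_cos.comp (continuous_const.mul
        (continuous_snd.comp continuous_subtype_val))))⟩ with hb
  set S : Submodule ℝ C(Kset, ℝ) := Submodule.span ℝ (Set.range bmap) with hS
  have hbmem : ∀ q, bmap q ∈ S := fun q => Submodule.subset_span ⟨q, rfl⟩
  have hmul_basis : ∀ q r : ℕ × ℕ, bmap q * bmap r ∈ S := by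
    intro q r
    have hident : bmap q * bmap r = (1/4 : ℝ) •
        (bmap (q.1+r.1, q.2+r.2) + bmap (q.1+r.1, max q.2 r.2 - min q.2 r.2)
          + bmap (max q.1 r.1 - min q.1 r.1, q.2+r.2)
          + bmap (max q.1 r.1 - min q.1 r.1, max q.2 r.2 - min q.2 r.2)) := by
      ext x
      simp only [hb, ContinuousMap.mul_apply, ContinuousMap.smul_apply,
        ContinuousMap.add_apply, ContinuousMap.coe_mk, smul_eq_mul]
      have e1 := cos_prod q.1 r.1 (x:ℝ×ℝ).1
      have e2 := cos_prod q.2 r.2 (x:ℝ×ℝ).2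
      calc Real.cos (q.1 * (x:ℝ×ℝ).1) * Real.cos (q.2 * (x:ℝ×ℝ).2)
            * (Real.cos (r.1 * (x:ℝ×ℝ).1) * Real.cos (r.2 * (x:ℝ×ℝ).2))
          = (Real.cos (q.1 * (x:ℝ×ℝ).1) * Real.cos (r.1 * (x:ℝ×ℝ).1))
            * (Real.cos (q.2 * (x:ℝ×ℝ).2) * Real.cos (r.2 * (x:ℝ×ℝ).2)) := by ring
        _ = _ := by rw [e1, e2]; ring
    rw [hident]
    exact Submodule.smul_mem _ _ (Submodule.add_mem _ (Submodule.add_mem _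
      (Submodule.add_mem _ (hbmem _) (hbmem _)) (hbmem _)) (hbmem _))
  have hmulS : ∀ x ∈ S, ∀ y ∈ S, x * y ∈ S := by
    intro x hx
    refine Submodule.span_induction (p := fun x _ => ∀ y ∈ S, x * y ∈ S)
      ?_ ?_ ?_ ?_ hx
    · rintro x ⟨q, rfl⟩ y hy
      refine Submodule.span_induction (p := fun y _ => bmap q * y ∈ S) ?_ ?_ ?_ ?_ hy
      · rintro y ⟨r, rfl⟩; exact hmul_basis q r
      · show bmap q * 0 ∈ S; rw [mul_zero]; exact Submodule.zero_mem S
      · intro a b _ _ ha hb2; show bmap q * (a + b) ∈ S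
        rw [mul_add]; exact Submodule.add_mem _ ha hb2
      · intro t a _ ha; show bmap q * (t • a) ∈ S
        rw [mul_smul_comm]; exact Submodule.smul_mem _ _ ha
    · intro y _; show (0 : C(Kset, ℝ)) * y ∈ S
      rw [zero_mul]; exact Submodule.zero_mem S
    · intro a b _ _ ha hb2 y hy; show (a + b) * y ∈ S
      rw [add_mul]; exact Submodule.add_mem _ (ha y hy) (hb2 y hy)
    · intro t a _ ha y hy; show (t • a) * y ∈ S
      rw [smul_mul_assoc]; exact Submodule.smul_mem _ _ (ha y hy)
  have honeS : (1 : C(Kset, ℝ)) ∈ S := by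
    have h00 : bmap (0, 0) = 1 := by
      ext x
      simp [hb]
    rw [← h00]; exact hbmem _
  set A : Subalgebra ℝ C(Kset, ℝ) := S.toSubalgebra honeS (fun x y hx hy => hmulS x hx y hy) with hA
  have hsep : A.SeparatesPoints := by
    intro x y hxy
    have hxy' : (x:ℝ×ℝ) ≠ (y:ℝ×ℝ) := fun h => hxy (Subtype.ext h)
    by_cases h1 : (x:ℝ×ℝ).1 = (y:ℝ×ℝ).1
    · have h2 : (x:ℝ×ℝ).2 ≠ (y:ℝ×ℝ).2 := fun h2 => hxy' (Prod.ext h1 h2)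
      refine ⟨_, ⟨bmap (0, 1), Submodule.mem_toSubalgebra.mpr (hbmem (0,1)), rfl⟩, ?_⟩
      simp only [hb, ContinuousMap.coe_mk, Nat.cast_zero, Nat.cast_one, zero_mul,
        Real.cos_zero, one_mul]
      intro hcc
      exact h2 (Real.injOn_cos x.2.2 y.2.2 hcc)
    · refine ⟨_, ⟨bmap (1, 0), Submodule.mem_toSubalgebra.mpr (hbmem (1,0)), rfl⟩, ?_⟩
      simp only [hb, ContinuousMap.coe_mk, Nat.cast_zero, Nat.cast_one, zero_mul,
        Real.cos_zero, mul_one, one_mul]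
      intro hcc
      exact h1 (Real.injOn_cos x.2.1 y.2.1 hcc)
  -- ∫ H² over Q is 0
  have hH2int : IntegrableOn (fun p => H p^2) Qset volume := integrableQ (hHcont.pow 2)
  have hHabsint : IntegrableOn (fun p => |H p|) Qset volume := integrableQ hHcont.abs
  set D : ℝ := ∫ p in Qset, |H p| with hD
  have hDnn : 0 ≤ D := setIntegral_nonneg hQmeas (fun p _ => abs_nonneg _)
  have hH2 : (∫ p in Qset, H p^2) = 0 := by
    have hle : ∀ ε : ℝ, 0 < ε → (∫ p in Qset, H p^2) ≤ ε := by
      intro ε hε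
      set ε' : ℝ := ε / (D + 1) with hε'
      have hε'pos : 0 < ε' := by positivity
      obtain ⟨g, hgnorm⟩ := ContinuousMap.exists_mem_subalgebra_near_continuous_of_separatesPoints
        A hsep (fun x : Kset => H (x:ℝ×ℝ)) (hHcont.comp continuous_subtype_val) ε' hε'pos
      obtain ⟨l, hl⟩ := Finsupp.mem_span_range_iff_exists_finsupp.mp
        (Submodule.mem_toSubalgebra.mp g.2)
      set g' : ℝ × ℝ → ℝ := fun p => ∑ q ∈ l.support,
        l q * (Real.cos (q.1 * p.1) * Real.cos (q.2 * p.2)) with hg'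
      have hg'cont : Continuous g' := by
        apply continuous_finset_sum
        intro q _
        fun_prop
      have hg'K : ∀ x : Kset, g' (x:ℝ×ℝ) = (g : C(Kset, ℝ)) x := by
        intro x
        rw [← hl, Finsupp.sum]
        simp only [ContinuousMap.sum_apply, ContinuousMap.smul_apply, hb,
          ContinuousMap.coe_mk, smul_eq_mul, hg']
      have hIg' : (∫ p in Qset, H p * g' p) = 0 := by
        have hexp : ∀ p : ℝ × ℝ, H p * g' p = ∑ q ∈ l.support,
            l q * (H p * Real.cos (q.1 * p.1) * Real.cos (q.2 * p.2)) := by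
          intro p
          rw [hg', Finset.mul_sum]
          exact Finset.sum_congr rfl (fun q _ => by ring)
        simp_rw [hexp]
        rw [MeasureTheory.integral_finset_sum]
        · refine Finset.sum_eq_zero (fun q _ => ?_)
          rw [MeasureTheory.integral_const_mul, hHorth, mul_zero]
        · intro q _
          exact (integrableQ (by fun_prop : Continuous (fun p : ℝ × ℝ =>
            H p * Real.cos (q.1 * p.1) * Real.cos (q.2 * p.2)))).const_mul _
      have hsplit : (∫ p in Qset, H p^2)
          = (∫ p in Qset, H p * (H p - g' p)) + ∫ p in Qset, H p * g' p := by
        rw [← MeasureTheory.integral_add (integrableQ (u := fun p => H p * (H p - g' p)) (hHcont.mul (hHcont.sub hg'cont)))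
          (integrableQ (u := fun p => H p * g' p) (hHcont.mul hg'cont))]
        refine setIntegral_congr_fun hQmeas (fun p _ => ?_)
        ring
      calc (∫ p in Qset, H p^2) = ∫ p in Qset, H p * (H p - g' p) := by
            rw [hsplit, hIg', add_zero]
        _ ≤ ∫ p in Qset, |H p| * ε' := by
            refine setIntegral_mono_on (integrableQ (hHcont.mul (hHcont.sub hg'cont)))
              (hHabsint.mul_const ε') hQmeas (fun p hp => ?_)
            have h5 := hgnorm ⟨p, Qsub hp⟩
            rw [Real.norm_eq_abs] at h5
            have h6 : |H p - g' p| ≤ ε' := by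
              rw [abs_sub_comm]
              have := hg'K ⟨p, Qsub hp⟩
              calc |g' p - H p| = |(g : C(Kset, ℝ)) ⟨p, Qsub hp⟩ - H p| := by rw [this]
                _ ≤ ε' := (h5).le
            calc H p * (H p - g' p) ≤ |H p * (H p - g' p)| := le_abs_self _
              _ = |H p| * |H p - g' p| := abs_mul _ _
              _ ≤ |H p| * ε' := mul_le_mul_of_nonneg_left h6 (abs_nonneg _)
        _ = D * ε' := by rw [MeasureTheory.integral_mul_const]
        _ ≤ ε := by
            rw [hε']
            rw [div_eq_mul_inv, ← mul_assoc]
            rw [mul_comm D ε, mul_assoc]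
            nth_rewrite 2 [← mul_one ε]
            refine mul_le_mul_of_nonneg_left ?_ hε.le
            rw [mul_inv_le_iff₀ (by positivity)]
            linarith
    have hnn : 0 ≤ ∫ p in Qset, H p^2 := setIntegral_nonneg hQmeas (fun p _ => sq_nonneg _)
    by_contra hne
    have hpos : 0 < ∫ p in Qset, H p^2 := lt_of_le_of_ne hnn (Ne.symm hne)
    linarith [hle ((∫ p in Qset, H p^2)/2) (by linarith)]
  -- hence H = 0 on Kset
  have haeH : (fun p => H p) =ᵐ[volume.restrict Qset] 0 := by
    have h2 := (MeasureTheory.integral_eq_zero_iff_of_nonneg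
      (fun p => sq_nonneg (H p)) hH2int).mp hH2
    filter_upwards [h2] with p hp
    have hps : H p ^ 2 = 0 := hp
    show H p = 0
    exact sq_eq_zero_iff.mp hps
  have hQclosure : Qset ⊆ closure (interior Qset) := by
    have : closure (interior Qset) = Kset := by
      rw [Qset, interior_prod_eq, interior_Ioc, closure_prod_eq,
        closure_Ioo (Ne.symm Real.pi_ne_zero), Kset]
    rw [this]; exact Qsub
  have hHzeroQ : Set.EqOn H 0 Qset :=
    MeasureTheory.Measure.eqOn_of_ae_eq haeH hHcont.continuousOn
      continuousOn_const hQclosure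
  have hclosQ : closure Qset = Kset := by
    rw [Qset, closure_prod_eq, closure_Ioc (Ne.symm Real.pi_ne_zero), Kset]
  have hHzeroK : Set.EqOn H 0 Kset :=
    hclosQ ▸ (hHzeroQ.closure hHcont continuous_const)
  -- conclude: G ∘ (arccos, arccos) = f on the square
  have hFG : ∀ p : ℝ × ℝ, p ∈ Set.Icc (-1:ℝ) 1 ×ˢ Set.Icc (-1:ℝ) 1 →
      G (Real.arccos p.1, Real.arccos p.2) = f p.1 p.2 := by
    intro p hp
    have hk : (Real.arccos p.1, Real.arccos p.2) ∈ Kset :=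
      ⟨⟨Real.arccos_nonneg _, Real.arccos_le_pi _⟩,
        ⟨Real.arccos_nonneg _, Real.arccos_le_pi _⟩⟩
    have h0 := hHzeroK hk
    have h1 : F (Real.arccos p.1, Real.arccos p.2) = G (Real.arccos p.1, Real.arccos p.2) := by
      have h0' : F (Real.arccos p.1, Real.arccos p.2) - G (Real.arccos p.1, Real.arccos p.2)
          = 0 := h0
      linarith
    rw [← h1, hFdef]
    simp only
    rw [Real.cos_arccos hp.1.1 hp.1.2, Real.cos_arccos hp.2.1 hp.2.2]
  -- uniform convergence of the square partial sums
  have hsq : Filter.Tendsto (fun N : ℕ => Finset.range (N+1) ×ˢ Finset.range (N+1))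
      Filter.atTop (Filter.atTop : Filter (Finset (ℕ × ℕ))) := by
    apply Filter.tendsto_atTop_finset_of_monotone
    · intro m n hmn
      exact Finset.product_subset_product (Finset.range_subset_range.mpr (by omega))
        (Finset.range_subset_range.mpr (by omega))
    · intro q
      exact ⟨max q.1 q.2, Finset.mem_product.mpr
        ⟨Finset.mem_range.mpr (by omega), Finset.mem_range.mpr (by omega)⟩⟩
  have hcomp : TendstoUniformly (fun (s : Finset (ℕ × ℕ)) (p : ℝ × ℝ) =>
      ∑ q ∈ s, term q (Real.arccos p.1, Real.arccos p.2))
      (fun p : ℝ × ℝ => G (Real.arccos p.1, Real.arccos p.2)) Filter.atTop :=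
    hGunif.comp (fun p : ℝ × ℝ => (Real.arccos p.1, Real.arccos p.2))
  have hmain : TendstoUniformly (fun N (p : ℝ × ℝ) =>
      ∑ q ∈ Finset.range (N+1) ×ˢ Finset.range (N+1),
        term q (Real.arccos p.1, Real.arccos p.2))
      (fun p : ℝ × ℝ => G (Real.arccos p.1, Real.arccos p.2)) Filter.atTop :=
    fun u hu => hsq.eventually (hcomp u hu)
  have hmainOn := hmain.tendstoUniformlyOn
    (s := Set.Icc (-1:ℝ) 1 ×ˢ Set.Icc (-1:ℝ) 1)
  have heq : ∀ (N : ℕ) (p : ℝ × ℝ),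
      (∑ q ∈ Finset.range (N+1) ×ˢ Finset.range (N+1),
        term q (Real.arccos p.1, Real.arccos p.2))
      = ∑ i ∈ Finset.range (N + 1), ∑ j ∈ Finset.range (N + 1),
        w i * w j * cheb f i j * T i p.1 * T j p.2 := by
    intro N p
    rw [Finset.sum_product]
    rfl
  have hfinal := hmainOn.congr (F' := fun N (p : ℝ × ℝ) =>
      ∑ i ∈ Finset.range (N + 1), ∑ j ∈ Finset.range (N + 1),
        w i * w j * cheb f i j * T i p.1 * T j p.2)
    (Filter.Eventually.of_forall (fun N p _ => heq N p))
  exact hfinal.congr_right (fun p hp => hFG p hp)
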